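/- For any finite ¬-free nested programs P and Q, P and Q are strongly equivalent if and only if the classical propositional formula pl(P) ≢ pl(Q) is unsatisfiable, where pl(·) is the two-copy classical translation. -/
import Mathlib


open scoped Classical

inductive Lit where
  | pos : ℕ → Lit
  | neg : ℕ → Lit
deriving DecidableEq

inductive Fml where
  | bot : Fml
  | top : Fml
  | lit : Lit → Fml
  | not : Fml → Fml
  | conj : Fml → Fml → Fml
  | disj : Fml → Fml → Fml
deriving DecidableEq

structure Rule where
  head : Fml
  body : Fml
deriving DecidableEq

abbrev Prog := Set Rule

/-- A set of literals is consistent if it contains no complementary pair. -/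
def Consistent (X : Set Lit) : Prop :=
  ∀ a : ℕ, ¬ (Lit.pos a ∈ X ∧ Lit.neg a ∈ X)

def Sat (X : Set Lit) : Fml → Prop
  | Fml.bot => False
  | Fml.top => True
  | Fml.lit l => l ∈ X
  | Fml.not F => ¬ Sat X F
  | Fml.conj F G => Sat X F ∧ Sat X G
  | Fml.disj F G => Sat X F ∨ Sat X G

def SatRule (X : Set Lit) (r : Rule) : Prop := Sat X r.body → Sat X r.head

def SatProg (X : Set Lit) (P : Prog) : Prop := ∀ r ∈ P, SatRule X r

/-- The reduct of a formula relative to X. -/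
noncomputable def Reduct (X : Set Lit) : Fml → Fml
  | Fml.bot => Fml.bot
  | Fml.top => Fml.top
  | Fml.lit l => Fml.lit l
  | Fml.not F => if Sat X F then Fml.bot else Fml.top
  | Fml.conj F G => Fml.conj (Reduct X F) (Reduct X G)
  | Fml.disj F G => Fml.disj (Reduct X F) (Reduct X G)

noncomputable def ReductRule (X : Set Lit) (r : Rule) : Rule :=
  ⟨Reduct X r.head, Reduct X r.body⟩

noncomputable def ReductProg (X : Set Lit) (P : Prog) : Prog :=
  ReductRule X '' P

/-- Y is an answer set for P: Y is minimal among consistent sets satisfying the reduct of P w.r.t. Y. -/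
def AnswerSet (Y : Set Lit) (P : Prog) : Prop :=
  Consistent Y ∧ SatProg Y (ReductProg Y P) ∧
    ∀ Z : Set Lit, Consistent Z → SatProg Z (ReductProg Y P) → Z ⊆ Y → Z = Y

def SEModel (P : Prog) (X Y : Set Lit) : Prop :=
  Consistent X ∧ Consistent Y ∧ X ⊆ Y ∧ SatProg Y P ∧ SatProg X (ReductProg Y P)

def StrongEq (P Q : Prog) : Prop :=
  ∀ R : Prog, ∀ Y : Set Lit, AnswerSet Y (P ∪ R) ↔ AnswerSet Y (Q ∪ R)

def Fml.negFree : Fml → Prop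
  | Fml.bot => True
  | Fml.top => True
  | Fml.lit l => ∃ a, l = Lit.pos a
  | Fml.not F => F.negFree
  | Fml.conj F G => F.negFree ∧ G.negFree
  | Fml.disj F G => F.negFree ∧ G.negFree

def ProgNegFree (P : Prog) : Prop := ∀ r ∈ P, r.head.negFree ∧ r.body.negFree

/-- The set of atoms (positive literals) in a set of literals. -/
def PosLits (Z : Set Lit) : Set Lit := {l ∈ Z | ∃ a, l = Lit.pos a}

def AtomsOnly (Z : Set Lit) : Prop := ∀ l ∈ Z, ∃ a, l = Lit.pos a

/-- Classical propositional formulas over an original (`false`) and a primed (`true`)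
copy of the atoms. -/
inductive CF where
  | bot : CF
  | top : CF
  | atom : Bool → ℕ → CF
  | not : CF → CF
  | and : CF → CF → CF
  | or : CF → CF → CF
  | imp : CF → CF → CF

/-- Classical satisfaction: an interpretation is the set of true (copy, atom) pairs. -/
def CSat (I : Set (Bool × ℕ)) : CF → Prop
  | CF.bot => False
  | CF.top => True
  | CF.atom b a => (b, a) ∈ I
  | CF.not φ => ¬ CSat I φ
  | CF.and φ ψ => CSat I φ ∧ CSat I ψ
  | CF.or φ ψ => CSat I φ ∨ CSat I ψ
  | CF.imp φ ψ => CSat I φ → CSat I ψ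

/-- pl: replace not by ¬, ; by ∨, , by ∧ (on ¬-free formulas all literals are atoms). -/
def plF : Fml → CF
  | Fml.bot => CF.bot
  | Fml.top => CF.top
  | Fml.lit (Lit.pos a) => CF.atom false a
  | Fml.lit (Lit.neg _) => CF.bot
  | Fml.not F => CF.not (plF F)
  | Fml.conj F G => CF.and (plF F) (plF G)
  | Fml.disj F G => CF.or (plF F) (plF G)

def plR (r : Rule) : CF := CF.imp (plF r.body) (plF r.head)

/-- φ' : replace every occurrence of an original atom that is not in the scope of ¬
by its primed counterpart. -/
def primeCF : CF → CF
  | CF.bot => CF.bot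
  | CF.top => CF.top
  | CF.atom _ a => CF.atom true a
  | CF.not φ => CF.not φ
  | CF.and φ ψ => CF.and (primeCF φ) (primeCF ψ)
  | CF.or φ ψ => CF.or (primeCF φ) (primeCF ψ)
  | CF.imp φ ψ => CF.imp (primeCF φ) (primeCF ψ)

/-- The theory pl(P) = { pl(r) : r ∈ P } ∪ { pl(r)' : r ∈ P } ∪ { A' ⊃ A : A ∈ 𝒜 }. -/
def plTh (A : Set ℕ) (P : Prog) : Set CF :=
  {φ | ∃ r ∈ P, φ = plR r} ∪ {φ | ∃ r ∈ P, φ = primeCF (plR r)} ∪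
    {φ | ∃ a ∈ A, φ = CF.imp (CF.atom true a) (CF.atom false a)}

/-- Atoms occurring in a formula. -/
def Fml.atoms : Fml → Set ℕ
  | Fml.bot => ∅
  | Fml.top => ∅
  | Fml.lit (Lit.pos a) => {a}
  | Fml.lit (Lit.neg a) => {a}
  | Fml.not F => F.atoms
  | Fml.conj F G => F.atoms ∪ G.atoms
  | Fml.disj F G => F.atoms ∪ G.atoms

def ProgAtoms (P : Prog) : Set ℕ :=
  {a | ∃ r ∈ P, a ∈ r.head.atoms ∪ r.body.atoms}

/-! ### Auxiliary material for stmt16 -/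

def interpOf (b : Bool) (I : Set (Bool × ℕ)) : Set Lit :=
  {l | ∃ a, l = Lit.pos a ∧ (b, a) ∈ I}

lemma pos_mem_interpOf {b : Bool} {I : Set (Bool × ℕ)} {a : ℕ} :
    Lit.pos a ∈ interpOf b I ↔ (b, a) ∈ I := by
  simp [interpOf]

lemma consistent_interpOf (b : Bool) (I : Set (Bool × ℕ)) : Consistent (interpOf b I) := by
  rintro a ⟨-, ⟨a', h', -⟩⟩
  cases h'

lemma sat_reduct_self (Y : Set Lit) : ∀ F : Fml, Sat Y (Reduct Y F) ↔ Sat Y F := by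
  intro F
  induction F with
  | bot => simp [Reduct]
  | top => simp [Reduct]
  | lit l => simp [Reduct]
  | not F ih => by_cases h : Sat Y F <;> simp [Reduct, Sat, h]
  | conj F G ihF ihG => simp [Reduct, Sat, ihF, ihG]
  | disj F G ihF ihG => simp [Reduct, Sat, ihF, ihG]

lemma satRule_reduct_self {Y : Set Lit} {r : Rule} :
    SatRule Y (ReductRule Y r) ↔ SatRule Y r := by
  simp [SatRule, ReductRule, sat_reduct_self]

lemma satProg_reduct_iff {Z Y : Set Lit} {S : Prog} :
    SatProg Z (ReductProg Y S) ↔ ∀ r ∈ S, SatRule Z (ReductRule Y r) := by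
  simp [SatProg, ReductProg, Set.forall_mem_image]

lemma satProg_reduct_self {Y : Set Lit} {S : Prog} :
    SatProg Y (ReductProg Y S) ↔ SatProg Y S := by
  rw [satProg_reduct_iff]
  exact forall₂_congr fun r _ => satRule_reduct_self

lemma reductProg_union {Y : Set Lit} {S T : Prog} :
    ReductProg Y (S ∪ T) = ReductProg Y S ∪ ReductProg Y T :=
  Set.image_union _ _ _

lemma satProg_union {Z : Set Lit} {S T : Prog} :
    SatProg Z (S ∪ T) ↔ SatProg Z S ∧ SatProg Z T := by
  constructor
  · exact fun h => ⟨fun r hr => h r (Or.inl hr), fun r hr => h r (Or.inr hr)⟩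
  · rintro ⟨h1, h2⟩ r (hr | hr)
    exacts [h1 r hr, h2 r hr]

lemma seModel_union {S T : Prog} {X Y : Set Lit} :
    SEModel (S ∪ T) X Y ↔ SEModel S X Y ∧ SEModel T X Y := by
  unfold SEModel
  rw [reductProg_union, satProg_union, satProg_union]
  tauto

lemma answerSet_iff_SE {Y : Set Lit} {S : Prog} :
    AnswerSet Y S ↔ SEModel S Y Y ∧ ∀ Z, Z ⊆ Y → SEModel S Z Y → Z = Y := by
  constructor
  · rintro ⟨hYc, hYr, hmin⟩
    refine ⟨⟨hYc, hYc, subset_rfl, satProg_reduct_self.mp hYr, hYr⟩, ?_⟩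
    intro Z hZY hZ
    exact hmin Z hZ.1 hZ.2.2.2.2 hZY
  · rintro ⟨⟨hYc, -, -, hYS, hYr⟩, hmin⟩
    refine ⟨hYc, hYr, ?_⟩
    intro Z hZc hZr hZY
    exact hmin Z hZY ⟨hZc, hYc, hZY, hYS, hZr⟩

lemma strongEq_of_se {P Q : Prog} (h : ∀ X Y, SEModel P X Y ↔ SEModel Q X Y) :
    StrongEq P Q := by
  intro R Y
  have key : ∀ (X Y' : Set Lit), SEModel (P ∪ R) X Y' ↔ SEModel (Q ∪ R) X Y' := by
    intro X Y'
    rw [seModel_union, seModel_union, h]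
  rw [answerSet_iff_SE, answerSet_iff_SE]
  simp only [key]

lemma se_of_strong {P Q : Prog} (h : StrongEq P Q) {X Y : Set Lit}
    (hse : SEModel P X Y) : SEModel Q X Y := by
  obtain ⟨hXc, hYc, hXY, hYP, hXred⟩ := hse
  have hAS1 : AnswerSet Y (P ∪ {r | ∃ l ∈ Y, r = (⟨Fml.lit l, Fml.top⟩ : Rule)}) := by
    refine ⟨hYc, ?_, ?_⟩
    · rw [reductProg_union, satProg_union]
      refine ⟨satProg_reduct_self.mpr hYP, ?_⟩
      rw [satProg_reduct_iff]
      rintro r ⟨l, hl, rfl⟩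
      simp [SatRule, ReductRule, Reduct, Sat, hl]
    · intro Z hZc hZ hZY
      rw [reductProg_union, satProg_union, satProg_reduct_iff, satProg_reduct_iff] at hZ
      refine Set.Subset.antisymm hZY fun l hl => ?_
      have := hZ.2 _ ⟨l, hl, rfl⟩
      simpa [SatRule, ReductRule, Reduct, Sat] using this
  have hASQ1 := (h _ Y).mp hAS1
  have hYQred : SatProg Y (ReductProg Y Q) := by
    have h2 := hASQ1.2.1
    rw [reductProg_union, satProg_union] at h2
    exact h2.1
  have hYQ : SatProg Y Q := satProg_reduct_self.mp hYQred
  by_cases hXeq : X = Y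
  · subst hXeq
    exact ⟨hYc, hYc, subset_rfl, hYQ, hYQred⟩
  · set R2 : Prog := {r | ∃ l ∈ X, r = (⟨Fml.lit l, Fml.top⟩ : Rule)} ∪
      {r | ∃ a ∈ Y \ X, ∃ b ∈ Y \ X, r = (⟨Fml.lit a, Fml.lit b⟩ : Rule)} with hR2def
    have hXR2 : SatProg X (ReductProg Y R2) := by
      rw [satProg_reduct_iff]
      rintro r (⟨l, hl, rfl⟩ | ⟨a, ha, b, hb, rfl⟩)
      · simp [SatRule, ReductRule, Reduct, Sat, hl]
      · simp only [SatRule, ReductRule, Reduct, Sat]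
        exact fun hbX => absurd hbX hb.2
    have hnotASP : ¬ AnswerSet Y (P ∪ R2) := by
      rintro ⟨-, -, hmin⟩
      apply hXeq
      refine hmin X hXc ?_ hXY
      rw [reductProg_union, satProg_union]
      exact ⟨hXred, hXR2⟩
    have hYsat : SatProg Y (ReductProg Y (Q ∪ R2)) := by
      rw [reductProg_union, satProg_union]
      refine ⟨hYQred, ?_⟩
      rw [satProg_reduct_iff]
      rintro r (⟨l, hl, rfl⟩ | ⟨a, ha, b, hb, rfl⟩)
      · simp [SatRule, ReductRule, Reduct, Sat, hXY hl]
      · simp only [SatRule, ReductRule, Reduct, Sat]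
        exact fun _ => ha.1
    have hZex : ∃ Z, Consistent Z ∧ SatProg Z (ReductProg Y (Q ∪ R2)) ∧ Z ⊆ Y ∧ Z ≠ Y := by
      by_contra hc
      push_neg at hc
      exact (fun hh => hnotASP ((h R2 Y).mpr hh)) ⟨hYc, hYsat, fun Z a b c => hc Z a b c⟩
    obtain ⟨Z, hZc, hZsat, hZY, hZne⟩ := hZex
    rw [reductProg_union, satProg_union] at hZsat
    have hXZ : X ⊆ Z := by
      intro l hl
      have := (satProg_reduct_iff.mp hZsat.2) _ (Or.inl ⟨l, hl, rfl⟩)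
      simpa [SatRule, ReductRule, Reduct, Sat] using this
    have hZX : Z ⊆ X := by
      intro l hl
      by_contra hlX
      apply hZne
      refine Set.Subset.antisymm hZY fun m hm => ?_
      by_cases hmX : m ∈ X
      · exact hXZ hmX
      · have := (satProg_reduct_iff.mp hZsat.2) _
          (Or.inr ⟨m, ⟨hm, hmX⟩, l, ⟨hZY hl, hlX⟩, rfl⟩)
        simp only [SatRule, ReductRule, Reduct, Sat] at this
        exact this hl
    have hZeqX : Z = X := Set.Subset.antisymm hZX hXZ
    exact ⟨hXc, hYc, hXY, hYQ, hZeqX ▸ hZsat.1⟩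

/-! ### negFree congruence lemmas -/

lemma sat_congr {X X' : Set Lit} : ∀ {F : Fml}, F.negFree →
    (∀ a ∈ F.atoms, (Lit.pos a ∈ X ↔ Lit.pos a ∈ X')) → (Sat X F ↔ Sat X' F) := by
  intro F
  induction F with
  | bot => intro _ _; simp [Sat]
  | top => intro _ _; simp [Sat]
  | lit l =>
      rintro ⟨a, rfl⟩ hag
      exact hag a rfl
  | not F ih =>
      intro h hag
      simp only [Sat]
      exact not_congr (ih h hag)
  | conj F G ihF ihG =>
      rintro ⟨hF, hG⟩ hag
      simp only [Sat]
      exact and_congr (ihF hF fun a ha => hag a (Set.mem_union_left _ ha))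
        (ihG hG fun a ha => hag a (Set.mem_union_right _ ha))
  | disj F G ihF ihG =>
      rintro ⟨hF, hG⟩ hag
      simp only [Sat]
      exact or_congr (ihF hF fun a ha => hag a (Set.mem_union_left _ ha))
        (ihG hG fun a ha => hag a (Set.mem_union_right _ ha))

lemma reduct_congr {X X' : Set Lit} : ∀ {F : Fml}, F.negFree →
    (∀ a ∈ F.atoms, (Lit.pos a ∈ X ↔ Lit.pos a ∈ X')) → Reduct X F = Reduct X' F := by
  intro F
  induction F with
  | bot => intro _ _; rfl
  | top => intro _ _; rfl
  | lit l => intro _ _; rfl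
  | not F ih =>
      intro h hag
      simp only [Reduct]
      exact if_congr (sat_congr h hag) rfl rfl
  | conj F G ihF ihG =>
      rintro ⟨hF, hG⟩ hag
      simp only [Reduct]
      rw [ihF hF fun a ha => hag a (Set.mem_union_left _ ha),
        ihG hG fun a ha => hag a (Set.mem_union_right _ ha)]
  | disj F G ihF ihG =>
      rintro ⟨hF, hG⟩ hag
      simp only [Reduct]
      rw [ihF hF fun a ha => hag a (Set.mem_union_left _ ha),
        ihG hG fun a ha => hag a (Set.mem_union_right _ ha)]

lemma reduct_negFree {Y : Set Lit} : ∀ {F : Fml}, F.negFree → (Reduct Y F).negFree := by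
  intro F
  induction F with
  | bot => intro _; trivial
  | top => intro _; trivial
  | lit l => intro h; exact h
  | not F ih =>
      intro h
      by_cases hs : Sat Y F <;> simp [Reduct, Fml.negFree, hs]
  | conj F G ihF ihG =>
      rintro ⟨hF, hG⟩
      exact ⟨ihF hF, ihG hG⟩
  | disj F G ihF ihG =>
      rintro ⟨hF, hG⟩
      exact ⟨ihF hF, ihG hG⟩

lemma reduct_atoms (Y : Set Lit) : ∀ F : Fml, (Reduct Y F).atoms ⊆ F.atoms := by
  intro F
  induction F with
  | bot => exact subset_rfl
  | top => exact subset_rfl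
  | lit l => cases l <;> exact subset_rfl
  | not F ih =>
      by_cases hs : Sat Y F <;> simp [Reduct, Fml.atoms, hs]
  | conj F G ihF ihG =>
      simp only [Reduct, Fml.atoms]
      exact Set.union_subset_union ihF ihG
  | disj F G ihF ihG =>
      simp only [Reduct, Fml.atoms]
      exact Set.union_subset_union ihF ihG

lemma satRule_congr {X X' : Set Lit} {r : Rule} (hh : r.head.negFree) (hb : r.body.negFree)
    (hag : ∀ a ∈ r.head.atoms ∪ r.body.atoms, (Lit.pos a ∈ X ↔ Lit.pos a ∈ X')) :
    SatRule X r ↔ SatRule X' r := by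
  unfold SatRule
  exact imp_congr (sat_congr hb fun a ha => hag a (Set.mem_union_right _ ha))
    (sat_congr hh fun a ha => hag a (Set.mem_union_left _ ha))

lemma reductRule_congr {Y Y' : Set Lit} {r : Rule} (hh : r.head.negFree) (hb : r.body.negFree)
    (hag : ∀ a ∈ r.head.atoms ∪ r.body.atoms, (Lit.pos a ∈ Y ↔ Lit.pos a ∈ Y')) :
    ReductRule Y r = ReductRule Y' r := by
  unfold ReductRule
  rw [reduct_congr hh fun a ha => hag a (Set.mem_union_left _ ha),
    reduct_congr hb fun a ha => hag a (Set.mem_union_right _ ha)]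

lemma satRule_reduct_congr {X X' Y : Set Lit} {r : Rule} (hh : r.head.negFree)
    (hb : r.body.negFree)
    (hag : ∀ a ∈ r.head.atoms ∪ r.body.atoms, (Lit.pos a ∈ X ↔ Lit.pos a ∈ X')) :
    SatRule X (ReductRule Y r) ↔ SatRule X' (ReductRule Y r) := by
  simp only [SatRule, ReductRule]
  exact imp_congr
    (sat_congr (reduct_negFree hb)
      fun a ha => hag a (Set.mem_union_right _ (reduct_atoms Y r.body ha)))
    (sat_congr (reduct_negFree hh)
      fun a ha => hag a (Set.mem_union_left _ (reduct_atoms Y r.head ha)))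

/-! ### pl translation lemmas -/

lemma csat_plF {I : Set (Bool × ℕ)} : ∀ {F : Fml}, F.negFree →
    (CSat I (plF F) ↔ Sat (interpOf false I) F) := by
  intro F
  induction F with
  | bot => intro _; simp [plF, CSat, Sat]
  | top => intro _; simp [plF, CSat, Sat]
  | lit l =>
      rintro ⟨a, rfl⟩
      simp [plF, CSat, Sat, pos_mem_interpOf]
  | not F ih =>
      intro h
      simp only [plF, CSat, Sat]
      exact not_congr (ih h)
  | conj F G ihF ihG =>
      rintro ⟨hF, hG⟩
      simp only [plF, CSat, Sat]
      exact and_congr (ihF hF) (ihG hG)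
  | disj F G ihF ihG =>
      rintro ⟨hF, hG⟩
      simp only [plF, CSat, Sat]
      exact or_congr (ihF hF) (ihG hG)

lemma csat_prime_plF {I : Set (Bool × ℕ)} : ∀ {F : Fml}, F.negFree →
    (CSat I (primeCF (plF F)) ↔ Sat (interpOf true I) (Reduct (interpOf false I) F)) := by
  intro F
  induction F with
  | bot => intro _; simp [plF, primeCF, CSat, Reduct, Sat]
  | top => intro _; simp [plF, primeCF, CSat, Reduct, Sat]
  | lit l =>
      rintro ⟨a, rfl⟩
      simp [plF, primeCF, CSat, Reduct, Sat, pos_mem_interpOf]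
  | not F ih =>
      intro h
      simp only [plF, primeCF, CSat, Reduct]
      rw [csat_plF (show F.negFree from h)]
      by_cases hs : Sat (interpOf false I) F <;> simp [Sat, hs]
  | conj F G ihF ihG =>
      rintro ⟨hF, hG⟩
      simp only [plF, primeCF, CSat, Reduct, Sat]
      exact and_congr (ihF hF) (ihG hG)
  | disj F G ihF ihG =>
      rintro ⟨hF, hG⟩
      simp only [plF, primeCF, CSat, Reduct, Sat]
      exact or_congr (ihF hF) (ihG hG)

lemma csat_plR {I : Set (Bool × ℕ)} {r : Rule} (hh : r.head.negFree) (hb : r.body.negFree) :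
    CSat I (plR r) ↔ SatRule (interpOf false I) r := by
  simp only [plR, CSat, SatRule]
  exact imp_congr (csat_plF hb) (csat_plF hh)

lemma csat_primeR {I : Set (Bool × ℕ)} {r : Rule} (hh : r.head.negFree) (hb : r.body.negFree) :
    CSat I (primeCF (plR r)) ↔
      SatRule (interpOf true I) (ReductRule (interpOf false I) r) := by
  simp only [plR, primeCF, CSat, SatRule, ReductRule]
  exact imp_congr (csat_prime_plF hb) (csat_prime_plF hh)

/-! ### The two bridges between SE-models and classical models -/

lemma se_of_classical {A : Set ℕ} {P Q : Prog} (hPnf : ProgNegFree P) (hQnf : ProgNegFree Q)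
    (h : ∀ I : Set (Bool × ℕ), (∀ φ ∈ plTh A P, CSat I φ) → ∀ φ ∈ plTh A Q, CSat I φ)
    {X Y : Set Lit} (hse : SEModel P X Y) : SEModel Q X Y := by
  obtain ⟨hXc, hYc, hXY, hYP, hXred⟩ := hse
  set I : Set (Bool × ℕ) :=
    {p | (p.1 = false ∧ Lit.pos p.2 ∈ Y) ∨ (p.1 = true ∧ Lit.pos p.2 ∈ X)} with hIdef
  have hYag : ∀ a, (Lit.pos a ∈ interpOf false I ↔ Lit.pos a ∈ Y) := by
    intro a
    rw [pos_mem_interpOf]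
    simp [hIdef]
  have hXag : ∀ a, (Lit.pos a ∈ interpOf true I ↔ Lit.pos a ∈ X) := by
    intro a
    rw [pos_mem_interpOf]
    simp [hIdef]
  have hIP : ∀ φ ∈ plTh A P, CSat I φ := by
    rintro φ ((⟨r, hr, rfl⟩ | ⟨r, hr, rfl⟩) | ⟨a, ha, rfl⟩)
    · rw [csat_plR (hPnf r hr).1 (hPnf r hr).2,
        satRule_congr (hPnf r hr).1 (hPnf r hr).2 fun a _ => hYag a]
      exact hYP r hr
    · rw [csat_primeR (hPnf r hr).1 (hPnf r hr).2,
        reductRule_congr (hPnf r hr).1 (hPnf r hr).2 fun a _ => hYag a,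
        satRule_reduct_congr (hPnf r hr).1 (hPnf r hr).2 fun a _ => hXag a]
      exact satProg_reduct_iff.mp hXred r hr
    · simp only [CSat]
      intro hta
      have hx : Lit.pos a ∈ X := by simpa [hIdef] using hta
      show (false, a) ∈ I
      simp [hIdef, hXY hx]
  have hIQ := h I hIP
  refine ⟨hXc, hYc, hXY, ?_, ?_⟩
  · intro r hr
    have := hIQ (plR r) (Or.inl (Or.inl ⟨r, hr, rfl⟩))
    rwa [csat_plR (hQnf r hr).1 (hQnf r hr).2,
      satRule_congr (hQnf r hr).1 (hQnf r hr).2 fun a _ => hYag a] at this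
  · rw [satProg_reduct_iff]
    intro r hr
    have := hIQ (primeCF (plR r)) (Or.inl (Or.inr ⟨r, hr, rfl⟩))
    rwa [csat_primeR (hQnf r hr).1 (hQnf r hr).2,
      reductRule_congr (hQnf r hr).1 (hQnf r hr).2 fun a _ => hYag a,
      satRule_reduct_congr (hQnf r hr).1 (hQnf r hr).2 fun a _ => hXag a] at this

lemma classical_of_se {A : Set ℕ} {P Q : Prog} (hPA : ProgAtoms P ⊆ A) (hQA : ProgAtoms Q ⊆ A)
    (hPnf : ProgNegFree P) (hQnf : ProgNegFree Q)
    (hse : ∀ X Y, SEModel P X Y → SEModel Q X Y)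
    (I : Set (Bool × ℕ)) (hI : ∀ φ ∈ plTh A P, CSat I φ) : ∀ φ ∈ plTh A Q, CSat I φ := by
  have hprime : ∀ a ∈ A, ((true, a) ∈ I → (false, a) ∈ I) := by
    intro a ha
    have := hI _ (Or.inr ⟨a, ha, rfl⟩)
    simpa only [CSat] using this
  have hXag : ∀ a ∈ A,
      (Lit.pos a ∈ interpOf true I ↔ Lit.pos a ∈ interpOf true I ∩ interpOf false I) := by
    intro a ha
    simp only [Set.mem_inter_iff, pos_mem_interpOf]
    exact ⟨fun h' => ⟨h', hprime a ha h'⟩, fun h' => h'.1⟩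
  have hatP : ∀ r ∈ P, ∀ a ∈ r.head.atoms ∪ r.body.atoms, a ∈ A :=
    fun r hr a ha => hPA ⟨r, hr, ha⟩
  have hatQ : ∀ r ∈ Q, ∀ a ∈ r.head.atoms ∪ r.body.atoms, a ∈ A :=
    fun r hr a ha => hQA ⟨r, hr, ha⟩
  have hXcons : Consistent (interpOf true I ∩ interpOf false I) :=
    fun a hc => (consistent_interpOf true I) a ⟨hc.1.1, hc.2.1⟩
  have hsem : SEModel P (interpOf true I ∩ interpOf false I) (interpOf false I) := by
    refine ⟨hXcons, consistent_interpOf false I, Set.inter_subset_right, ?_, ?_⟩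
    · intro r hr
      have := hI (plR r) (Or.inl (Or.inl ⟨r, hr, rfl⟩))
      rwa [csat_plR (hPnf r hr).1 (hPnf r hr).2] at this
    · rw [satProg_reduct_iff]
      intro r hr
      have := hI (primeCF (plR r)) (Or.inl (Or.inr ⟨r, hr, rfl⟩))
      rwa [csat_primeR (hPnf r hr).1 (hPnf r hr).2,
        satRule_reduct_congr (hPnf r hr).1 (hPnf r hr).2
          fun a ha => hXag a (hatP r hr a ha)] at this
  have hseQ := hse _ _ hsem
  rintro φ ((⟨r, hr, rfl⟩ | ⟨r, hr, rfl⟩) | ⟨a, ha, rfl⟩)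
  · rw [csat_plR (hQnf r hr).1 (hQnf r hr).2]
    exact hseQ.2.2.2.1 r hr
  · rw [csat_primeR (hQnf r hr).1 (hQnf r hr).2,
      satRule_reduct_congr (hQnf r hr).1 (hQnf r hr).2 fun a ha => hXag a (hatQ r hr a ha)]
    exact satProg_reduct_iff.mp hseQ.2.2.2.2 r hr
  · exact hI _ (Or.inr ⟨a, ha, rfl⟩)

/-- finite ¬-free nested programs P and Q (over atoms A) are strongly
equivalent iff the classical formula pl(P) ≢ pl(Q) is unsatisfiable. -/
theorem stmt16 (A : Set ℕ) (P Q : Prog) (hPfin : P.Finite) (hQfin : Q.Finite)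
    (hAfin : A.Finite) (hPA : ProgAtoms P ⊆ A) (hQA : ProgAtoms Q ⊆ A)
    (hPnf : ProgNegFree P) (hQnf : ProgNegFree Q) :
    StrongEq P Q ↔
      ¬ ∃ I : Set (Bool × ℕ),
          ¬ ((∀ φ ∈ plTh A P, CSat I φ) ↔ (∀ φ ∈ plTh A Q, CSat I φ)) := by
  constructor
  · rintro h ⟨I, hI⟩
    apply hI
    constructor
    · exact classical_of_se hPA hQA hPnf hQnf (fun X Y hs => se_of_strong h hs) I
    · exact classical_of_se hQA hPA hQnf hPnf
        (fun X Y hs => se_of_strong (fun R Y' => (h R Y').symm) hs) I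
  · intro h
    push_neg at h
    apply strongEq_of_se
    intro X Y
    constructor
    · exact fun hs => se_of_classical hPnf hQnf (fun I hIp => (h I).mp hIp) hs
    · exact fun hs => se_of_classical hQnf hPnf (fun I hIp => (h I).mpr hIp) hs
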